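/- arXiv:2210.05007 — 2 statements merged into one kernel-verified Lean document; each statement's English description precedes it below -/
import Mathlib

section
/- Let ξ > 0, let M ≥ 1 be an integer, let E satisfy 0 ≤ E ≤ (1+ξ)/(1+3ξ), and let E_0 ∈ [0, E]. Then the minimum of f_{M,ξ}(p) over all vectors p = (p_0, …, p_M) ∈ ℝ^{M+1} satisfying p_n ≥ 0 for all n, ∑_{n=0}^{M} p_n = 1, and ∑_{n=0}^{M} n·p_n = E_0 (equality constraint), is attained at the unique point given by p_0 = 1−E_0, p_1 = E_0, and p_n = 0 for all n ∈ {2, …, M}. -/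
open Finset

/-- The objective function `f_{M,ξ}` of the unidirectional teleportation optimization:
`f_{M,ξ}(p) = (1/(1+ξ)) [ (∑_{n=0}^{M} p_n/(1+ξ)^n)^2 + (∑_{n=1}^{M} p_n ξ/(1+ξ)^n)^2 ]`. -/
noncomputable def fUni (M : ℕ) (ξ : ℝ) (p : Fin (M + 1) → ℝ) : ℝ :=
  (1 / (1 + ξ)) *
    ((∑ n : Fin (M + 1), p n / (1 + ξ) ^ (n : ℕ)) ^ 2 +
      (∑ n : Fin (M + 1), if 1 ≤ (n : ℕ) then p n * ξ / (1 + ξ) ^ (n : ℕ) else 0) ^ 2)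

/-- Feasibility with energy-equality constraint: `p_n ≥ 0`, `∑ p_n = 1`, `∑ n p_n = E₀`. -/
def FeasibleUniEq (M : ℕ) (E₀ : ℝ) (p : Fin (M + 1) → ℝ) : Prop :=
  (∀ n, 0 ≤ p n) ∧ (∑ n, p n = 1) ∧ (∑ n : Fin (M + 1), ((n : ℕ) : ℝ) * p n = E₀)

/-- The candidate optimal point: `p_0 = 1 - E₀`, `p_1 = E₀`, `p_n = 0` for `n ≥ 2`. -/
noncomputable def optUni (M : ℕ) (E₀ : ℝ) : Fin (M + 1) → ℝ :=
  fun n => if (n : ℕ) = 0 then 1 - E₀ else if (n : ℕ) = 1 then E₀ else 0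

lemma keyIneq (ξ E₀ x : ℝ) (hξ : 0 < ξ) (h0 : 0 ≤ E₀) (h1 : E₀*(1+3*ξ) ≤ 1+ξ)
    (hx : x * (1+ξ) = 1) :
    ∀ n : ℕ, 2 ≤ n →
      (1 - E₀*ξ*x) + (n:ℝ) * ((1 + E₀*ξ*x*(ξ-1)) * x - (1 - E₀*ξ*x))
        ≤ (1 + E₀*ξ*x*(ξ-1)) * x ^ n := by
  have hξ1 : (0:ℝ) < 1+ξ := by linarith
  have hxe : x = (1+ξ)⁻¹ := by field_simp at hx ⊢; linarith
  have hx0 : 0 < x := by rw [hxe]; positivity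
  have hx1 : x < 1 := by rw [hxe]; rw [inv_lt_one_iff₀]; right; linarith
  have hE1 : E₀ ≤ 1 := by nlinarith
  have hC : 0 ≤ 1 + E₀*ξ*x*(ξ-1) := by nlinarith [mul_pos hξ hx0, mul_nonneg h0 (mul_pos hξ hx0).le]
  have hnum : 0 ≤ (1+ξ)*ξ*(2+ξ) - E₀*ξ*(2*ξ^2+5*ξ+1) := by
    nlinarith [mul_nonneg (mul_nonneg h0 hξ.le) (sq_nonneg (1+ξ)),
      mul_nonneg hξ.le (mul_nonneg (sub_nonneg.2 h1) (by linarith : (0:ℝ) ≤ 2+ξ))]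
  have hkey2 : (1 + E₀*ξ*x*(ξ-1)) * x^2 ≤ 1 - 2*ξ*E₀*x := by
    have hiden : 1 - 2*ξ*E₀*x - (1 + E₀*ξ*x*(ξ-1))*x^2
        = ((1+ξ)*ξ*(2+ξ) - E₀*ξ*(2*ξ^2+5*ξ+1)) / (1+ξ)^3 := by
      rw [hxe]; field_simp; ring
    have := div_nonneg hnum (by positivity : (0:ℝ) ≤ (1+ξ)^3)
    linarith [hiden ▸ this]
  have hid : (1 - E₀*ξ*x) - (1 + E₀*ξ*x*(ξ-1)) * x = ξ*x*(1 - 2*ξ*E₀*x) := by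
    linear_combination (-(1 - E₀*ξ*x)) * hx
  intro n hn
  induction n with
  | zero => omega
  | succ m ih =>
    rcases Nat.lt_or_ge m 2 with hm | hm
    · have hm1 : m = 1 := by omega
      subst hm1
      push_cast
      have hb : (1 - E₀*ξ*x) - 2*((1 + E₀*ξ*x*(ξ-1))*x) + (1 + E₀*ξ*x*(ξ-1))*x^2
          = ξ^2*((1+ξ) - E₀*(1+3*ξ)) / (1+ξ)^3 := by
        rw [hxe]; field_simp; ring
      have h2 := div_nonneg (mul_nonneg (sq_nonneg ξ) (sub_nonneg.2 h1))
        (by positivity : (0:ℝ) ≤ (1+ξ)^3)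
      rw [← hb] at h2
      linarith
    · have IH := ih hm
      have hxn : x^m ≤ x^2 := pow_le_pow_of_le_one hx0.le hx1.le hm
      have hCx2 : (1 + E₀*ξ*x*(ξ-1)) * x^m ≤ 1 - 2*ξ*E₀*x :=
        le_trans (mul_le_mul_of_nonneg_left hxn hC) hkey2
      have hB := mul_le_mul_of_nonneg_left hCx2 (by positivity : (0:ℝ) ≤ ξ*x)
      have hpow : (1 + E₀*ξ*x*(ξ-1))*x^(m+1)
          = (1 + E₀*ξ*x*(ξ-1))*x^m - ξ*x*((1 + E₀*ξ*x*(ξ-1))*x^m) := by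
        linear_combination ((1 + E₀*ξ*x*(ξ-1))*x^m) * hx
      push_cast
      linarith [IH, hB, hid, hpow]

lemma sum_two {M : ℕ} (hM : 1 ≤ M) (F : Fin (M+1) → ℝ)
    (h : ∀ n : Fin (M+1), (n:ℕ) ≠ 0 → (n:ℕ) ≠ 1 → F n = 0) :
    ∑ n, F n = F ⟨0, by omega⟩ + F ⟨1, by omega⟩ := by
  have h01 : (⟨0, by omega⟩ : Fin (M+1)) ≠ ⟨1, by omega⟩ := by simp [Fin.ext_iff]
  rw [← Finset.sum_subset (Finset.subset_univ {⟨0, by omega⟩, ⟨1, by omega⟩})]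
  · rw [Finset.sum_pair h01]
  · intro n _ hn
    simp only [Finset.mem_insert, Finset.mem_singleton, Fin.ext_iff] at hn
    push_neg at hn
    exact h n hn.1 hn.2

theorem unidirectional_optimal_eq_constraint (ξ E E₀ : ℝ) (M : ℕ) (hξ : 0 < ξ)
    (hM : 1 ≤ M) (hE0 : 0 ≤ E) (hE : E ≤ (1 + ξ) / (1 + 3 * ξ))
    (hE₀ : E₀ ∈ Set.Icc 0 E) :
    FeasibleUniEq M E₀ (optUni M E₀) ∧
      ∀ p : Fin (M + 1) → ℝ, FeasibleUniEq M E₀ p →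
        fUni M ξ (optUni M E₀) ≤ fUni M ξ p ∧
          (fUni M ξ p = fUni M ξ (optUni M E₀) → p = optUni M E₀) := by
  obtain ⟨hE₀0, hE₀E⟩ := hE₀
  have hξ1 : (0:ℝ) < 1 + ξ := by linarith
  have h3ξ : (0:ℝ) < 1 + 3*ξ := by linarith
  have hE₀b : E₀ * (1+3*ξ) ≤ 1+ξ := by
    have h := hE₀E.trans hE
    rw [le_div_iff₀ h3ξ] at h; exact h
  have hE₀1 : E₀ ≤ 1 := by nlinarith
  set x : ℝ := (1+ξ)⁻¹ with hxdef
  have hx : x * (1+ξ) = 1 := inv_mul_cancel₀ (ne_of_gt hξ1)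
  have hx0 : 0 < x := by rw [hxdef]; positivity
  have hconv : ∀ (a : ℝ) (n : ℕ), a / (1+ξ)^n = a * x^n := by
    intro a n; rw [hxdef, inv_pow, div_eq_mul_inv]
  have hopt0 : optUni M E₀ ⟨0, by omega⟩ = 1 - E₀ := by simp [optUni]
  have hopt1 : optUni M E₀ ⟨1, by omega⟩ = E₀ := by simp [optUni]
  have hoptz : ∀ n : Fin (M+1), (n:ℕ) ≠ 0 → (n:ℕ) ≠ 1 → optUni M E₀ n = 0 := by
    intro n h0 h1; simp [optUni, h0, h1]
  have hfeas : FeasibleUniEq M E₀ (optUni M E₀) := by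
    refine ⟨?_, ?_, ?_⟩
    · intro n
      by_cases hn0 : (n:ℕ) = 0
      · simp only [optUni, hn0, if_pos]; norm_num; linarith
      · by_cases hn1 : (n:ℕ) = 1
        · simp [optUni, hn0, hn1]; exact hE₀0
        · simp [optUni, hn0, hn1]
    · rw [sum_two hM _ hoptz, hopt0, hopt1]; ring
    · rw [sum_two hM (fun n => ((n:ℕ):ℝ) * optUni M E₀ n)
        (by intro n h0 h1; simp [hoptz n h0 h1])]
      simp only [hopt0, hopt1]
      norm_num
  refine ⟨hfeas, ?_⟩
  intro p hp
  obtain ⟨hp0, hp1, hp2⟩ := hp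
  set A : ℝ := 1 - E₀*ξ*x with hA
  set Bq : ℝ := E₀*ξ*x with hB
  have hS1q : ∑ n : Fin (M+1), optUni M E₀ n / (1+ξ)^(n:ℕ) = A := by
    rw [sum_two hM _ (by intro n h0 h1; simp [hoptz n h0 h1])]
    simp only [hopt0, hopt1]
    rw [hA, hB, hxdef]
    field_simp
    ring
  have hS2q : (∑ n : Fin (M+1),
      if 1 ≤ (n:ℕ) then optUni M E₀ n * ξ / (1+ξ)^(n:ℕ) else 0) = Bq := by
    rw [sum_two hM _ (by intro n h0 h1; rw [if_pos (by omega)]; simp [hoptz n h0 h1])]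
    simp only [hopt0, hopt1]
    rw [if_neg (by norm_num : ¬ ((1:ℕ) ≤ 0)), if_pos (le_refl 1), hB, hxdef]
    field_simp
    ring
  set d : Fin (M+1) → ℝ := fun n => p n - optUni M E₀ n with hd
  have hd_sum : ∑ n, d n = 0 := by
    rw [hd]; rw [Finset.sum_sub_distrib, hp1, hfeas.2.1]; ring
  have hd_mean : ∑ n : Fin (M+1), ((n:ℕ):ℝ) * d n = 0 := by
    rw [hd]
    simp only [mul_sub]
    rw [Finset.sum_sub_distrib, hp2, hfeas.2.2]; ring
  set ΔA : ℝ := ∑ n : Fin (M+1), d n * x^(n:ℕ) with hΔA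
  set ΔB : ℝ := ∑ n : Fin (M+1), (if 1 ≤ (n:ℕ) then d n * ξ * x^(n:ℕ) else 0) with hΔB
  have hS1p : ∑ n : Fin (M+1), p n / (1+ξ)^(n:ℕ) = A + ΔA := by
    have e : ∀ n : Fin (M+1), p n / (1+ξ)^(n:ℕ)
        = optUni M E₀ n / (1+ξ)^(n:ℕ) + d n * x^(n:ℕ) := by
      intro n; rw [hconv, hconv, hd]; ring
    rw [Finset.sum_congr rfl (fun n _ => e n), Finset.sum_add_distrib, hS1q, hΔA]
  have hS2p : (∑ n : Fin (M+1),
      if 1 ≤ (n:ℕ) then p n * ξ / (1+ξ)^(n:ℕ) else 0) = Bq + ΔB := by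
    have e : ∀ n : Fin (M+1), (if 1 ≤ (n:ℕ) then p n * ξ / (1+ξ)^(n:ℕ) else 0)
        = (if 1 ≤ (n:ℕ) then optUni M E₀ n * ξ / (1+ξ)^(n:ℕ) else 0)
          + (if 1 ≤ (n:ℕ) then d n * ξ * x^(n:ℕ) else 0) := by
      intro n
      by_cases hn : 1 ≤ (n:ℕ)
      · rw [if_pos hn, if_pos hn, if_pos hn, hconv, hconv, hd]; ring
      · rw [if_neg hn, if_neg hn, if_neg hn]; ring
    rw [Finset.sum_congr rfl (fun n _ => e n), Finset.sum_add_distrib, hS2q, hΔB]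
  have hone : (1:ℝ)/(1+ξ) = x := by rw [hxdef, one_div]
  have hobj : fUni M ξ p = fUni M ξ (optUni M E₀)
      + x*(2*(A*ΔA + Bq*ΔB) + ΔA^2 + ΔB^2) := by
    rw [fUni, fUni, hS1p, hS2p, hS1q, hS2q, hone]; ring
  -- key nonnegativity
  have hkeyAB : 0 ≤ A*ΔA + Bq*ΔB := by
    have hTsum : (∑ n : Fin (M+1), d n * ((A*x^(n:ℕ)
          + (if 1 ≤ (n:ℕ) then ξ*Bq*x^(n:ℕ) else 0)) - A
          - ((n:ℕ):ℝ)*((A + ξ*Bq)*x - A)))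
        = A*ΔA + Bq*ΔB - A*(∑ n, d n)
          - ((A + ξ*Bq)*x - A)*(∑ n : Fin (M+1), ((n:ℕ):ℝ) * d n) := by
      rw [hΔA, hΔB, Finset.mul_sum, Finset.mul_sum, Finset.mul_sum, Finset.mul_sum,
        ← Finset.sum_add_distrib, ← Finset.sum_sub_distrib, ← Finset.sum_sub_distrib]
      apply Finset.sum_congr rfl
      intro n _
      by_cases hn : 1 ≤ (n:ℕ)
      · rw [if_pos hn, if_pos hn]; ring
      · rw [if_neg hn, if_neg hn]; ring
    have hterm : ∀ n ∈ (univ : Finset (Fin (M+1))), 0 ≤ d n * ((A*x^(n:ℕ)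
          + (if 1 ≤ (n:ℕ) then ξ*Bq*x^(n:ℕ) else 0)) - A
          - ((n:ℕ):ℝ)*((A + ξ*Bq)*x - A)) := by
      intro n _
      rcases Nat.lt_or_ge (n:ℕ) 2 with h | h
      · have h01 : (n:ℕ) = 0 ∨ (n:ℕ) = 1 := by omega
        rcases h01 with h0 | h1
        · have : d n * ((A*x^(n:ℕ)
              + (if 1 ≤ (n:ℕ) then ξ*Bq*x^(n:ℕ) else 0)) - A
              - ((n:ℕ):ℝ)*((A + ξ*Bq)*x - A)) = 0 := by
            rw [h0, if_neg (by omega)]; push_cast; ring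
          rw [this]
        · have : d n * ((A*x^(n:ℕ)
              + (if 1 ≤ (n:ℕ) then ξ*Bq*x^(n:ℕ) else 0)) - A
              - ((n:ℕ):ℝ)*((A + ξ*Bq)*x - A)) = 0 := by
            rw [h1, if_pos (by omega)]; push_cast; ring
          rw [this]
      · have hdn : 0 ≤ d n := by
          have hz := hoptz n (by omega) (by omega)
          rw [hd]; simp only [hz, sub_zero]; exact hp0 n
        have hkey := keyIneq ξ E₀ x hξ hE₀0 hE₀b hx (n:ℕ) h
        have hCeq : (1 + E₀*ξ*x*(ξ-1)) = A + ξ*Bq := by rw [hA, hB]; ring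
        rw [← hA, hCeq] at hkey
        rw [if_pos (by omega)]
        apply mul_nonneg hdn
        have : A*x^(n:ℕ) + ξ*Bq*x^(n:ℕ) = (A + ξ*Bq)*x^(n:ℕ) := by ring
        rw [this]
        linarith
    have hnn := Finset.sum_nonneg hterm
    rw [hTsum, hd_sum, hd_mean, mul_zero, mul_zero, sub_zero, sub_zero] at hnn
    exact hnn
  constructor
  · rw [hobj]
    have : 0 ≤ x*(2*(A*ΔA + Bq*ΔB) + ΔA^2 + ΔB^2) :=
      mul_nonneg hx0.le (by nlinarith only [hkeyAB, sq_nonneg ΔA, sq_nonneg ΔB])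
    linarith only [this]
  · intro heq
    have hz : 2*(A*ΔA + Bq*ΔB) + ΔA^2 + ΔB^2 = 0 := by
      have hxz : x * (2*(A*ΔA + Bq*ΔB) + ΔA^2 + ΔB^2) = 0 := by
        linarith only [hobj, heq]
      rcases mul_eq_zero.mp hxz with h | h
      · exact absurd h (ne_of_gt hx0)
      · exact h
    have hA0 : ΔA = 0 := by
      have h4 : ΔA^2 ≤ 0 := by nlinarith only [hz, hkeyAB, sq_nonneg ΔB]
      exact pow_eq_zero_iff (two_ne_zero) |>.mp (le_antisymm h4 (sq_nonneg ΔA))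
    have hB0 : ΔB = 0 := by
      have h4 : ΔB^2 ≤ 0 := by nlinarith only [hz, hkeyAB, sq_nonneg ΔA]
      exact pow_eq_zero_iff (two_ne_zero) |>.mp (le_antisymm h4 (sq_nonneg ΔB))
    -- d 0 = 0
    have hd0 : d ⟨0, by omega⟩ = 0 := by
      have hdiff : (∑ n : Fin (M+1), (ξ * (d n * x^(n:ℕ))
          - (if 1 ≤ (n:ℕ) then d n * ξ * x^(n:ℕ) else 0))) = ξ * ΔA - ΔB := by
        rw [hΔA, hΔB, Finset.mul_sum, ← Finset.sum_sub_distrib]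
      have hval := sum_two hM (fun n => ξ * (d n * x^(n:ℕ))
          - (if 1 ≤ (n:ℕ) then d n * ξ * x^(n:ℕ) else 0))
        (by intro n h0 h1; have hn : 1 ≤ (n:ℕ) := by omega
            simp only [hn, if_true]; ring)
      rw [hdiff, hA0, hB0] at hval
      norm_num at hval
      have hmk : (⟨0, by omega⟩ : Fin (M+1)) = 0 := by
        ext; simp
      rw [hmk]
      have h2 : ξ * d 0 = 0 := by linarith [hval]
      exact (mul_eq_zero.mp h2).resolve_left (ne_of_gt hξ)
    -- d n = 0 for n ≥ 2
    have hdge2 : ∀ n : Fin (M+1), 2 ≤ (n:ℕ) → d n = 0 := by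
      have hGsum : (∑ n : Fin (M+1), (((n:ℕ):ℝ) - 1) * d n) = 0 := by
        simp only [sub_mul, one_mul]
        rw [Finset.sum_sub_distrib, hd_mean, hd_sum]; ring
      have hGnn : ∀ n ∈ (univ : Finset (Fin (M+1))), 0 ≤ (((n:ℕ):ℝ) - 1) * d n := by
        intro n _
        rcases Nat.lt_or_ge (n:ℕ) 2 with h | h
        · rcases (by omega : (n:ℕ) = 0 ∨ (n:ℕ) = 1) with h0 | h1
          · have : n = (⟨0, by omega⟩ : Fin (M+1)) := Fin.ext h0
            rw [this, hd0]; simp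
          · rw [h1]; norm_num
        · apply mul_nonneg
          · have : (2:ℝ) ≤ ((n:ℕ):ℝ) := by exact_mod_cast h
            linarith
          · have hz := hoptz n (by omega) (by omega)
            rw [hd]; simp only [hz, sub_zero]; exact hp0 n
      have hall := (Finset.sum_eq_zero_iff_of_nonneg hGnn).mp hGsum
      intro n hn
      have := hall n (Finset.mem_univ n)
      have hne : (((n:ℕ):ℝ) - 1) ≠ 0 := by
        have : (2:ℝ) ≤ ((n:ℕ):ℝ) := by exact_mod_cast hn
        intro hc; linarith
      exact (mul_eq_zero.mp this).resolve_left hne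
    -- d 1 = 0
    have hd1 : d ⟨1, by omega⟩ = 0 := by
      have hval := sum_two hM d (by intro n h0 h1; exact hdge2 n (by omega))
      rw [hd_sum, hd0] at hval
      linarith only [hval]
    funext n
    have hdn : d n = 0 := by
      rcases Nat.lt_or_ge (n:ℕ) 2 with h | h
      · rcases (by omega : (n:ℕ) = 0 ∨ (n:ℕ) = 1) with h0 | h1
        · have : n = (⟨0, by omega⟩ : Fin (M+1)) := Fin.ext h0
          rw [this]; exact hd0
        · have : n = (⟨1, by omega⟩ : Fin (M+1)) := Fin.ext h1
          rw [this]; exact hd1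
      · exact hdge2 n h
    have : p n - optUni M E₀ n = 0 := hdn
    linarith
end

section
/- Let ξ > 0, let M ≥ 1 be an integer, let E satisfy 0 ≤ 2E ≤ (1+ξ)/(2+3ξ), and let E_0 ∈ [0, E]. Then the minimum of f_{M,ξ,ξ}(p) over all vectors p = (p_{m,n})_{m,n=0}^{M} satisfying p_{m,n} ≥ 0 for all m, n, ∑_{m,n=0}^{M} p_{m,n} = 1, and ∑_{m,n=0}^{M} (m+n) p_{m,n} = 2E_0 (equality constraint), is attained at the unique point given by p_{0,0} = 1−2E_0, p_{0,1} = p_{1,0} = E_0, and p_{m,n} = 0 whenever m+n ≥ 2. -/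
open Finset

/-- `T_ξ^{mm'} = ∑_{k=0}^{min(m,m')} C(m,k) C(m',k) ξ^{2k}/(1+ξ)^{m+m'}`. -/
noncomputable def Tbi (ξ : ℝ) (m m' : ℕ) : ℝ :=
  ∑ k ∈ Finset.range (min m m' + 1),
    (m.choose k : ℝ) * (m'.choose k : ℝ) * ξ ^ (2 * k) / (1 + ξ) ^ (m + m')

/-- The objective function `f_{M,ξ,ξ'}` of the bidirectional teleportation optimization. -/
noncomputable def fBi (M : ℕ) (ξ ξ' : ℝ) (p : Fin (M + 1) → Fin (M + 1) → ℝ) : ℝ :=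
  (1 / ((1 + ξ) * (1 + ξ'))) *
    ∑ m : Fin (M + 1), ∑ n : Fin (M + 1), ∑ m' : Fin (M + 1), ∑ n' : Fin (M + 1),
      p m n * p m' n' * Tbi ξ (m : ℕ) (m' : ℕ) * Tbi ξ' (n : ℕ) (n' : ℕ)

/-- Feasibility with energy-equality constraint:
`p_{m,n} ≥ 0`, `∑ p_{m,n} = 1`, `∑ (m+n) p_{m,n} = 2E₀`. -/
def FeasibleBiEq (M : ℕ) (E₀ : ℝ) (p : Fin (M + 1) → Fin (M + 1) → ℝ) : Prop :=
  (∀ m n, 0 ≤ p m n) ∧ (∑ m : Fin (M + 1), ∑ n : Fin (M + 1), p m n = 1) ∧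
    (∑ m : Fin (M + 1), ∑ n : Fin (M + 1), (((m : ℕ) : ℝ) + ((n : ℕ) : ℝ)) * p m n = 2 * E₀)

/-- The candidate optimal point: `p_{0,0} = 1 - 2E₀`, `p_{0,1} = p_{1,0} = E₀`,
and `p_{m,n} = 0` whenever `m + n ≥ 2`. -/
noncomputable def optBi (M : ℕ) (E₀ : ℝ) : Fin (M + 1) → Fin (M + 1) → ℝ :=
  fun m n =>
    if (m : ℕ) = 0 ∧ (n : ℕ) = 0 then 1 - 2 * E₀
    else if (m : ℕ) + (n : ℕ) = 1 then E₀ else 0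

/-! ### Auxiliary definitions and lemmas -/

noncomputable def ccH (ξ : ℝ) (m k : ℕ) : ℝ := (m.choose k : ℝ) * ξ ^ k / (1 + ξ) ^ m

lemma Tbi_eq_sum (ξ : ℝ) (M : ℕ) (m m' : Fin (M+1)) :
    Tbi ξ m m' = ∑ k : Fin (M+1), ccH ξ m k * ccH ξ m' k := by
  rw [Fin.sum_univ_eq_sum_range (fun k => ccH ξ m k * ccH ξ m' k)]
  unfold Tbi
  have hsub : min (m:ℕ) (m':ℕ) + 1 ≤ M + 1 := by
    have h1 : min (m:ℕ) (m':ℕ) ≤ (m:ℕ) := min_le_left _ _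
    have hm := m.isLt
    omega
  rw [Finset.sum_subset (Finset.range_subset_range.2 hsub)]
  · apply Finset.sum_congr rfl
    intro k _
    unfold ccH
    rw [div_mul_div_comm, ← pow_add, two_mul, pow_add]
    ring
  · intro k _ hk
    simp only [Finset.mem_range, not_lt] at hk
    have : (m:ℕ).choose k = 0 ∨ (m':ℕ).choose k = 0 := by
      rcases le_or_gt (m:ℕ) (m':ℕ) with h | h
      · left; exact Nat.choose_eq_zero_of_lt (by simp [min_eq_left h] at hk; omega)
      · right; exact Nat.choose_eq_zero_of_lt (by simp [min_eq_right h.le] at hk; omega)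
    rcases this with h | h <;> simp [h]

lemma gram_abstract {ι : Type*} [Fintype ι] (P : ι → ℝ) (c : ι → ι → ℝ) :
    ∑ q : ι, ∑ q' : ι, P q * P q' * (∑ r : ι, c q r * c q' r)
      = ∑ r : ι, (∑ q : ι, P q * c q r)^2 := by
  have h1 : ∀ r : ι, (∑ q : ι, P q * c q r)^2
      = ∑ q : ι, ∑ q' : ι, (P q * c q r) * (P q' * c q' r) := by
    intro r
    rw [sq, Finset.sum_mul_sum]
  calc ∑ q : ι, ∑ q' : ι, P q * P q' * (∑ r : ι, c q r * c q' r)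
      = ∑ q : ι, ∑ r : ι, ∑ q' : ι, (P q * c q r) * (P q' * c q' r) := by
        apply Finset.sum_congr rfl
        intro q _
        rw [Finset.sum_comm]
        apply Finset.sum_congr rfl
        intro q' _
        rw [Finset.mul_sum]
        apply Finset.sum_congr rfl
        intro r _
        ring
    _ = ∑ r : ι, ∑ q : ι, ∑ q' : ι, (P q * c q r) * (P q' * c q' r) :=
        Finset.sum_comm
    _ = ∑ r : ι, (∑ q : ι, P q * c q r)^2 := by
        apply Finset.sum_congr rfl
        intro r _
        rw [h1]

lemma fBi_eq_sq (M : ℕ) (ξ : ℝ) (p : Fin (M+1) → Fin (M+1) → ℝ) :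
    fBi M ξ ξ p = (1/((1+ξ)*(1+ξ))) *
      ∑ k : Fin (M+1), ∑ l : Fin (M+1),
        (∑ m : Fin (M+1), ∑ n : Fin (M+1), p m n * ccH ξ (m:ℕ) (k:ℕ) * ccH ξ (n:ℕ) (l:ℕ))^2 := by
  unfold fBi
  congr 1
  have key := gram_abstract (ι := Fin (M+1) × Fin (M+1)) (fun q => p q.1 q.2)
      (fun q r => ccH ξ (q.1:ℕ) (r.1:ℕ) * ccH ξ (q.2:ℕ) (r.2:ℕ))
  simp only [Fintype.sum_prod_type] at key
  calc ∑ m : Fin (M + 1), ∑ n : Fin (M + 1), ∑ m' : Fin (M + 1), ∑ n' : Fin (M + 1),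
      p m n * p m' n' * Tbi ξ (m : ℕ) (m' : ℕ) * Tbi ξ (n : ℕ) (n' : ℕ)
      = ∑ m : Fin (M+1), ∑ n : Fin (M+1), ∑ m' : Fin (M+1), ∑ n' : Fin (M+1),
        p m n * p m' n' * (∑ k : Fin (M+1), ∑ l : Fin (M+1),
          ccH ξ (m:ℕ) (k:ℕ) * ccH ξ (n:ℕ) (l:ℕ) * (ccH ξ (m':ℕ) (k:ℕ) * ccH ξ (n':ℕ) (l:ℕ))) := by
          apply Finset.sum_congr rfl; intro m _
          apply Finset.sum_congr rfl; intro n _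
          apply Finset.sum_congr rfl; intro m' _
          apply Finset.sum_congr rfl; intro n' _
          rw [Tbi_eq_sum ξ M m m', Tbi_eq_sum ξ M n n']
          simp only [Finset.mul_sum, Finset.sum_mul]
          rw [Finset.sum_comm]
          apply Finset.sum_congr rfl; intro k _
          apply Finset.sum_congr rfl; intro l _
          ring
    _ = ∑ k : Fin (M+1), ∑ l : Fin (M+1),
        (∑ m : Fin (M+1), ∑ n : Fin (M+1), p m n * ccH ξ (m:ℕ) (k:ℕ) * ccH ξ (n:ℕ) (l:ℕ))^2 := by
          rw [key]
          apply Finset.sum_congr rfl; intro k _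
          apply Finset.sum_congr rfl; intro l _
          congr 1
          apply Finset.sum_congr rfl; intro m _
          apply Finset.sum_congr rfl; intro n _
          ring

lemma pairize {M : ℕ} (F : Fin (M+1) → Fin (M+1) → ℝ) :
    ∑ k : Fin (M+1), ∑ l : Fin (M+1), F k l
      = ∑ r : Fin (M+1) × Fin (M+1), F r.1 r.2 :=
  (Fintype.sum_prod_type (f := fun r : Fin (M+1) × Fin (M+1) => F r.1 r.2)).symm

/-! Scalar lemmas -/

lemma phi_nonneg (t : ℝ) (h0 : 0 ≤ t) (h1 : t ≤ 1) (s : ℕ) :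
    0 ≤ t^s - 1 + (1-t)*s := by
  have h2 := one_add_mul_le_pow (a := t-1) (by nlinarith) s
  have h3 : (1 + (t-1))^s = t^s := by norm_num
  nlinarith [h2]

lemma phi_ge (t : ℝ) (h0 : 0 ≤ t) (h1 : t ≤ 1) : ∀ s : ℕ, 1 ≤ s →
    ((s:ℝ)-1)*(1-t)^2 ≤ t^s - 1 + (1-t)*s := by
  intro s hs
  induction s, hs using Nat.le_induction with
  | base => norm_num
  | succ n hn ih =>
    have hts : t^n ≤ t := by
      calc t^n ≤ t^1 := pow_le_pow_of_le_one h0 h1 hn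
      _ = t := pow_one t
    have hprod : 0 ≤ (1-t) * (t - t^n) := mul_nonneg (by linarith) (by linarith)
    have hp : t^(n+1) = t^n * t := pow_succ t n
    push_cast
    nlinarith [ih, hp, hprod]

lemma scalar_key (ξ t E₀ : ℝ) (ht0 : 0 < t) (ht1 : t < 1) (hu : 1 - t = ξ*t)
    (hE₀0 : 0 ≤ E₀) (hE₀q : E₀ ≤ 1/4) (s : ℕ) :
    0 ≤ (1 - 2*E₀*(1-t)) * (t^s - 1 + (1-t)*s)
        - (ξ*(ξ*t*E₀)) * ((s:ℝ)*t - (s:ℝ)*t^s) := by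
  match s with
  | 0 => norm_num
  | 1 => norm_num
  | (k+2) =>
    set s' : ℕ := k + 2 with hs'
    have hs1 : (1:ℕ) ≤ s' := by omega
    have hφ := phi_ge t ht0.le ht1.le s' hs1
    have hφ0 := phi_nonneg t ht0.le ht1.le s'
    have hts : (0:ℝ) ≤ t^s' := pow_nonneg ht0.le _
    have hsR : (2:ℝ) ≤ (s':ℝ) := by exact_mod_cast (by omega : 2 ≤ s')
    have hAstar : (1:ℝ)/2 ≤ 1 - 2*E₀*(1-t) := by nlinarith
    have hc : 0 ≤ ξ*t*E₀ := by nlinarith [mul_pos ht0 (by nlinarith : (0:ℝ) < ξ)]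
    have hψ : (s':ℝ)*t - (s':ℝ)*t^s' ≤ (s':ℝ)*t := by nlinarith
    have hξ0 : 0 < ξ := by nlinarith
    have h1 : (ξ*(ξ*t*E₀)) * ((s':ℝ)*t - (s':ℝ)*t^s') ≤ E₀ * (s':ℝ) * (1-t)^2 := by
      have hstep : (ξ*(ξ*t*E₀)) * ((s':ℝ)*t - (s':ℝ)*t^s') ≤ (ξ*(ξ*t*E₀)) * ((s':ℝ)*t) := by
        apply mul_le_mul_of_nonneg_left hψ (by positivity)
      calc (ξ*(ξ*t*E₀)) * ((s':ℝ)*t - (s':ℝ)*t^s') ≤ (ξ*(ξ*t*E₀)) * ((s':ℝ)*t) := hstep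
        _ = E₀ * (s':ℝ) * (ξ*t)^2 := by ring
        _ = E₀ * (s':ℝ) * (1-t)^2 := by rw [← hu]
    have h2 : E₀ * (s':ℝ) * (1-t)^2 ≤ (1 - 2*E₀*(1-t)) * (t^s' - 1 + (1-t)*s') := by
      have hstep : E₀ * (s':ℝ) ≤ (1/2) * ((s':ℝ) - 1) := by nlinarith
      have h3 : E₀ * (s':ℝ) * (1-t)^2 ≤ (1/2) * (((s':ℝ) - 1) * (1-t)^2) := by
        nlinarith [sq_nonneg (1-t)]
      calc E₀ * (s':ℝ) * (1-t)^2 ≤ (1/2) * (((s':ℝ) - 1) * (1-t)^2) := h3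
        _ ≤ (1 - 2*E₀*(1-t)) * (t^s' - 1 + (1-t)*s') := by nlinarith
    linarith

/-! ccH value lemmas -/

lemma ccH_zero' (ξ t : ℝ) (ht : t = 1/(1+ξ)) (m : ℕ) : ccH ξ m 0 = t^m := by
  subst ht
  unfold ccH
  rw [Nat.choose_zero_right, pow_zero, div_pow, one_pow]
  push_cast
  ring

lemma ccH_one' (ξ t : ℝ) (ht : t = 1/(1+ξ)) (m : ℕ) : ccH ξ m 1 = (m:ℝ) * ξ * t^m := by
  subst ht
  unfold ccH
  rw [Nat.choose_one_right, pow_one, div_pow, one_pow]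
  ring

lemma ccH_zero_succ (ξ : ℝ) (j : ℕ) : ccH ξ 0 (j+1) = 0 := by
  unfold ccH
  rw [Nat.choose_eq_zero_of_lt (Nat.succ_pos j)]
  simp

lemma ccH_one_succ (ξ : ℝ) (j : ℕ) : ccH ξ 1 (j+2) = 0 := by
  unfold ccH
  rw [Nat.choose_eq_zero_of_lt (by omega)]
  simp

/-! double-sum helpers -/

lemma dsum_congr {M : ℕ} {f g : Fin (M+1) → Fin (M+1) → ℝ} (h : ∀ m n, f m n = g m n) :
    ∑ m : Fin (M+1), ∑ n : Fin (M+1), f m n = ∑ m : Fin (M+1), ∑ n : Fin (M+1), g m n :=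
  Finset.sum_congr rfl fun m _ => Finset.sum_congr rfl fun n _ => h m n

lemma dsum_add {M : ℕ} (f g : Fin (M+1) → Fin (M+1) → ℝ) :
    ∑ m : Fin (M+1), ∑ n : Fin (M+1), (f m n + g m n)
      = (∑ m : Fin (M+1), ∑ n : Fin (M+1), f m n) + ∑ m : Fin (M+1), ∑ n : Fin (M+1), g m n := by
  simp [Finset.sum_add_distrib]

lemma dsum_sub {M : ℕ} (f g : Fin (M+1) → Fin (M+1) → ℝ) :
    ∑ m : Fin (M+1), ∑ n : Fin (M+1), (f m n - g m n)
      = (∑ m : Fin (M+1), ∑ n : Fin (M+1), f m n) - ∑ m : Fin (M+1), ∑ n : Fin (M+1), g m n := by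
  simp [Finset.sum_sub_distrib]

lemma dsum_mul {M : ℕ} (c : ℝ) (f : Fin (M+1) → Fin (M+1) → ℝ) :
    ∑ m : Fin (M+1), ∑ n : Fin (M+1), c * f m n
      = c * ∑ m : Fin (M+1), ∑ n : Fin (M+1), f m n := by
  simp [Finset.mul_sum]

lemma dsum_nonneg {M : ℕ} {f : Fin (M+1) → Fin (M+1) → ℝ} (h : ∀ m n, 0 ≤ f m n) :
    0 ≤ ∑ m : Fin (M+1), ∑ n : Fin (M+1), f m n :=
  Finset.sum_nonneg fun m _ => Finset.sum_nonneg fun n _ => h m n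

lemma dsum_eq_zero {M : ℕ} {f : Fin (M+1) → Fin (M+1) → ℝ} (h0 : ∀ m n, 0 ≤ f m n)
    (h : ∑ m : Fin (M+1), ∑ n : Fin (M+1), f m n = 0) : ∀ m n, f m n = 0 := by
  intro m n
  have h1 : ∑ n : Fin (M+1), f m n = 0 :=
    (Finset.sum_eq_zero_iff_of_nonneg
      (fun m _ => Finset.sum_nonneg fun n _ => h0 m n)).1 h m (mem_univ m)
  exact (Finset.sum_eq_zero_iff_of_nonneg (fun n _ => h0 m n)).1 h1 n (mem_univ n)

/-! three-point support lemmas -/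

lemma e_one {M : ℕ} (hM : 1 ≤ M) : ((1 : Fin (M+1)) : ℕ) = 1 := by
  rw [Fin.val_one']
  exact Nat.mod_eq_of_lt (by omega)

lemma sumS {M : ℕ} (hM : 1 ≤ M) (g : Fin (M+1) × Fin (M+1) → ℝ) :
    ∑ r ∈ ({((0:Fin (M+1)),(0:Fin (M+1))), ((0:Fin (M+1)),(1:Fin (M+1))),
      ((1:Fin (M+1)),(0:Fin (M+1)))} : Finset (Fin (M+1) × Fin (M+1))), g r
      = g (0,0) + g (0,1) + g (1,0) := by
  have e0 : ((0 : Fin (M+1)) : ℕ) = 0 := rfl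
  have e1 := e_one hM
  have h01 : ((0:Fin (M+1)),(0:Fin (M+1))) ∉ ({((0:Fin (M+1)),(1:Fin (M+1))),
      ((1:Fin (M+1)),(0:Fin (M+1)))} : Finset (Fin (M+1) × Fin (M+1))) := by
    simp [Prod.ext_iff, Fin.ext_iff, e0, e1] <;> omega
  have h02 : ((0:Fin (M+1)),(1:Fin (M+1))) ∉ (({((1:Fin (M+1)),(0:Fin (M+1)))}) :
      Finset (Fin (M+1) × Fin (M+1))) := by
    simp [Prod.ext_iff, Fin.ext_iff, e0, e1] <;> omega
  rw [Finset.sum_insert h01, Finset.sum_insert h02, Finset.sum_singleton]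
  show g (0, 0) + (g (0, 1) + g (1, 0)) = g (0, 0) + g (0, 1) + g (1, 0)
  ring

lemma notmemS {M : ℕ} (hM : 1 ≤ M) (x : Fin (M+1) × Fin (M+1))
    (hx : x ∉ ({((0:Fin (M+1)),(0:Fin (M+1))), ((0:Fin (M+1)),(1:Fin (M+1))),
      ((1:Fin (M+1)),(0:Fin (M+1)))} : Finset (Fin (M+1) × Fin (M+1)))) :
    ¬((x.1:ℕ) = 0 ∧ (x.2:ℕ) = 0) ∧ ¬((x.1:ℕ) = 0 ∧ (x.2:ℕ) = 1) ∧
      ¬((x.1:ℕ) = 1 ∧ (x.2:ℕ) = 0) := by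
  have e0 : ((0 : Fin (M+1)) : ℕ) = 0 := rfl
  have e1 := e_one hM
  simp only [Finset.mem_insert, Finset.mem_singleton] at hx
  push_neg at hx
  obtain ⟨hx1, hx2, hx3⟩ := hx
  refine ⟨fun ⟨a,b⟩ => hx1 ?_, fun ⟨a,b⟩ => hx2 ?_, fun ⟨a,b⟩ => hx3 ?_⟩
  · exact Prod.ext (Fin.ext (by rw [a]; exact e0.symm)) (Fin.ext (by rw [b]; exact e0.symm))
  · exact Prod.ext (Fin.ext (by rw [a]; exact e0.symm)) (Fin.ext (by rw [b]; exact e1.symm))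
  · exact Prod.ext (Fin.ext (by rw [a]; exact e1.symm)) (Fin.ext (by rw [b]; exact e0.symm))

lemma sum3 {M : ℕ} (hM : 1 ≤ M) (h : Fin (M+1) → Fin (M+1) → ℝ)
    (H : ∀ m n : Fin (M+1), 2 ≤ (m:ℕ) + (n:ℕ) → h m n = 0) :
    ∑ m : Fin (M+1), ∑ n : Fin (M+1), h m n = h 0 0 + h 0 1 + h 1 0 := by
  rw [pairize h, ← Finset.sum_subset (Finset.subset_univ
    ({((0:Fin (M+1)),(0:Fin (M+1))), ((0:Fin (M+1)),(1:Fin (M+1))),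
      ((1:Fin (M+1)),(0:Fin (M+1)))} : Finset (Fin (M+1) × Fin (M+1))))]
  · exact sumS hM _
  · intro x _ hx
    obtain ⟨h1, h2, h3⟩ := notmemS hM x hx
    apply H
    by_contra hcon
    push_neg at hcon
    have hc : ((x.1:ℕ) = 0 ∧ (x.2:ℕ) = 0) ∨ ((x.1:ℕ) = 0 ∧ (x.2:ℕ) = 1) ∨
        ((x.1:ℕ) = 1 ∧ (x.2:ℕ) = 0) := by omega
    tauto

lemma lower3 {M : ℕ} (hM : 1 ≤ M) (g : Fin (M+1) × Fin (M+1) → ℝ) (hg : ∀ r, 0 ≤ g r) :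
    g (0,0) + g (0,1) + g (1,0) ≤ ∑ r : Fin (M+1) × Fin (M+1), g r := by
  rw [← sumS hM g]
  exact Finset.sum_le_sum_of_subset_of_nonneg (Finset.subset_univ _) (fun r _ _ => hg r)

lemma sum_eq3 {M : ℕ} (hM : 1 ≤ M) (g : Fin (M+1) × Fin (M+1) → ℝ)
    (hz : ∀ x : Fin (M+1) × Fin (M+1), ¬((x.1:ℕ) = 0 ∧ (x.2:ℕ) = 0) →
      ¬((x.1:ℕ) = 0 ∧ (x.2:ℕ) = 1) → ¬((x.1:ℕ) = 1 ∧ (x.2:ℕ) = 0) → g x = 0) :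
    ∑ r : Fin (M+1) × Fin (M+1), g r = g (0,0) + g (0,1) + g (1,0) := by
  rw [← Finset.sum_subset (Finset.subset_univ
    ({((0:Fin (M+1)),(0:Fin (M+1))), ((0:Fin (M+1)),(1:Fin (M+1))),
      ((1:Fin (M+1)),(0:Fin (M+1)))} : Finset (Fin (M+1) × Fin (M+1))))]
  · exact sumS hM _
  · intro x _ hx
    obtain ⟨h1, h2, h3⟩ := notmemS hM x hx
    exact hz x h1 h2 h3

set_option maxHeartbeats 1000000 in
theorem bidirectional_optimal_eq_constraint (ξ E E₀ : ℝ) (M : ℕ) (hξ : 0 < ξ)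
    (hM : 1 ≤ M) (hE0 : 0 ≤ 2 * E) (hE : 2 * E ≤ (1 + ξ) / (2 + 3 * ξ))
    (hE₀ : E₀ ∈ Set.Icc 0 E) :
    FeasibleBiEq M E₀ (optBi M E₀) ∧
      ∀ p : Fin (M + 1) → Fin (M + 1) → ℝ, FeasibleBiEq M E₀ p →
        fBi M ξ ξ (optBi M E₀) ≤ fBi M ξ ξ p ∧
          (fBi M ξ ξ p = fBi M ξ ξ (optBi M E₀) → p = optBi M E₀) := by
  obtain ⟨hE₀0, hE₀E⟩ := hE₀
  have hξ1 : (0:ℝ) < 1 + ξ := by linarith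
  have h23 : (0:ℝ) < 2 + 3*ξ := by linarith
  have hhalf : (1+ξ)/(2+3*ξ) ≤ 1/2 := by
    rw [div_le_div_iff₀ h23 two_pos]
    nlinarith
  have h2E₀ : 2*E₀ ≤ 1/2 := by
    have : 2*E₀ ≤ 2*E := by linarith
    linarith [le_trans this hE]
  have hE₀q : E₀ ≤ 1/4 := by linarith
  set t : ℝ := 1/(1+ξ) with ht_def
  have ht0 : 0 < t := by rw [ht_def]; positivity
  have ht1 : t < 1 := by rw [ht_def, div_lt_one hξ1]; linarith
  have hu : 1 - t = ξ*t := by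
    rw [ht_def]
    field_simp
    ring
  have e0 : ((0 : Fin (M+1)) : ℕ) = 0 := rfl
  have e1 : ((1 : Fin (M+1)) : ℕ) = 1 := e_one hM
  -- optBi values
  have hopt00 : optBi M E₀ 0 0 = 1 - 2*E₀ := by simp [optBi]
  have hopt01 : optBi M E₀ 0 1 = E₀ := by
    unfold optBi
    rw [if_neg (by simp only [e0, e1]; omega), if_pos (by simp only [e0, e1])]
  have hopt10 : optBi M E₀ 1 0 = E₀ := by
    unfold optBi
    rw [if_neg (by simp only [e0, e1]; omega), if_pos (by simp only [e0, e1])]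
  have hoptz : ∀ m n : Fin (M+1), 2 ≤ (m:ℕ) + (n:ℕ) → optBi M E₀ m n = 0 := by
    intro m n h2
    unfold optBi
    rw [if_neg (by omega), if_neg (by omega)]
  have hfeas : FeasibleBiEq M E₀ (optBi M E₀) := by
    refine ⟨?_, ?_, ?_⟩
    · intro m n
      unfold optBi
      split_ifs <;> linarith
    · rw [sum3 hM _ hoptz, hopt00, hopt01, hopt10]
      ring
    · rw [sum3 hM (fun m n => (((m:ℕ):ℝ) + ((n:ℕ):ℝ)) * optBi M E₀ m n)
        (fun m n h2 => by simp only [hoptz m n h2, mul_zero])]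
      simp only [e0, e1, hopt00, hopt01, hopt10, Nat.cast_zero, Nat.cast_one]
      ring
  refine ⟨hfeas, ?_⟩
  intro p hp
  obtain ⟨hp0, hp1, hpE⟩ := hp
  -- value of fBi at optBi
  have hWopt : ∀ k l : ℕ,
      (∑ m : Fin (M+1), ∑ n : Fin (M+1), optBi M E₀ m n * ccH ξ (m:ℕ) k * ccH ξ (n:ℕ) l)
        = (1-2*E₀)*(ccH ξ 0 k * ccH ξ 0 l) + E₀*(ccH ξ 0 k * ccH ξ 1 l)
          + E₀*(ccH ξ 1 k * ccH ξ 0 l) := by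
    intro k l
    rw [sum3 hM _ (fun m n h2 => by simp only [hoptz m n h2, zero_mul])]
    simp only [e0, e1, hopt00, hopt01, hopt10]
    ring
  have hWoptz : ∀ k l : ℕ, ¬(k = 0 ∧ l = 0) → ¬(k = 0 ∧ l = 1) →
      ¬(k = 1 ∧ l = 0) →
      (∑ m : Fin (M+1), ∑ n : Fin (M+1),
        optBi M E₀ m n * ccH ξ (m:ℕ) k * ccH ξ (n:ℕ) l) = 0 := by
    intro k l h1 h2 h3
    rw [hWopt k l]
    rcases (by omega : k = 0 ∨ k = 1 ∨ 2 ≤ k) with hk | hk | hk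
    · have hl2 : 2 ≤ l := by omega
      obtain ⟨j, hj⟩ : ∃ j, l = j + 2 := ⟨l - 2, by omega⟩
      rw [hk, hj]
      have z1 : ccH ξ 0 (j+2) = 0 := ccH_zero_succ ξ (j+1)
      rw [z1, ccH_one_succ ξ j]
      ring
    · have hl1 : 1 ≤ l := by omega
      obtain ⟨j, hj⟩ : ∃ j, l = j + 1 := ⟨l - 1, by omega⟩
      rw [hk, hj, ccH_zero_succ ξ 0, ccH_zero_succ ξ j]
      ring
    · obtain ⟨j, hj⟩ : ∃ j, k = j + 2 := ⟨k - 2, by omega⟩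
      rw [hj]
      have z1 : ccH ξ 0 (j+2) = 0 := ccH_zero_succ ξ (j+1)
      rw [z1, ccH_one_succ ξ j]
      ring
  have hcc00 : ccH ξ 0 0 = 1 := by rw [ccH_zero' ξ t ht_def, pow_zero]
  have hcc10 : ccH ξ 1 0 = t := by rw [ccH_zero' ξ t ht_def, pow_one]
  have hcc01 : ccH ξ 0 1 = 0 := ccH_zero_succ ξ 0
  have hcc11 : ccH ξ 1 1 = ξ*t := by
    rw [ccH_one' ξ t ht_def, pow_one]
    push_cast
    ring
  have hfopt : fBi M ξ ξ (optBi M E₀)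
      = (1/((1+ξ)*(1+ξ))) * ((1 - 2*E₀*(1-t))^2 + (ξ*t*E₀)^2 + (ξ*t*E₀)^2) := by
    rw [fBi_eq_sq]
    congr 1
    have hpair : (∑ k : Fin (M+1), ∑ l : Fin (M+1), (∑ m : Fin (M+1), ∑ n : Fin (M+1),
        optBi M E₀ m n * ccH ξ (m:ℕ) (k:ℕ) * ccH ξ (n:ℕ) (l:ℕ))^2)
        = ∑ r : Fin (M+1) × Fin (M+1), (∑ m : Fin (M+1), ∑ n : Fin (M+1),
        optBi M E₀ m n * ccH ξ (m:ℕ) (r.1:ℕ) * ccH ξ (n:ℕ) (r.2:ℕ))^2 := pairize _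
    rw [hpair, sum_eq3 hM _ (fun x h1 h2 h3 => by simp [hWoptz (x.1:ℕ) (x.2:ℕ) h1 h2 h3])]
    simp only [hWopt, e0, e1, hcc00, hcc10, hcc01, hcc11]
    ring
  -- lower bound for fBi at p
  have hfp : fBi M ξ ξ p = (1/((1+ξ)*(1+ξ))) *
      ∑ r : Fin (M+1) × Fin (M+1), (∑ m : Fin (M+1), ∑ n : Fin (M+1),
        p m n * ccH ξ (m:ℕ) (r.1:ℕ) * ccH ξ (n:ℕ) (r.2:ℕ))^2 := by
    rw [fBi_eq_sq]
    congr 1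
    exact pairize _
  set A : ℝ := ∑ m : Fin (M+1), ∑ n : Fin (M+1), p m n * ccH ξ (m:ℕ) 0 * ccH ξ (n:ℕ) 0
    with hA_def
  set B : ℝ := ∑ m : Fin (M+1), ∑ n : Fin (M+1), p m n * ccH ξ (m:ℕ) 0 * ccH ξ (n:ℕ) 1
    with hB_def
  set C : ℝ := ∑ m : Fin (M+1), ∑ n : Fin (M+1), p m n * ccH ξ (m:ℕ) 1 * ccH ξ (n:ℕ) 0
    with hC_def
  have hlow : A^2 + B^2 + C^2 ≤ ∑ r : Fin (M+1) × Fin (M+1),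
      (∑ m : Fin (M+1), ∑ n : Fin (M+1),
        p m n * ccH ξ (m:ℕ) (r.1:ℕ) * ccH ξ (n:ℕ) (r.2:ℕ))^2 := by
    have h := lower3 hM (fun r : Fin (M+1) × Fin (M+1) =>
      (∑ m : Fin (M+1), ∑ n : Fin (M+1),
        p m n * ccH ξ (m:ℕ) (r.1:ℕ) * ccH ξ (n:ℕ) (r.2:ℕ))^2) (fun r => sq_nonneg _)
    simpa only [e0, e1, ← hA_def, ← hB_def, ← hC_def] using h
  set D : ℝ := ∑ m : Fin (M+1), ∑ n : Fin (M+1),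
    p m n * (t^((m:ℕ)+(n:ℕ)) - 1 + (1-t)*(((m:ℕ):ℝ)+((n:ℕ):ℝ))) with hD_def
  set Ψ : ℝ := ∑ m : Fin (M+1), ∑ n : Fin (M+1),
    p m n * ((((m:ℕ):ℝ)+((n:ℕ):ℝ))*t - (((m:ℕ):ℝ)+((n:ℕ):ℝ))*t^((m:ℕ)+(n:ℕ))) with hΨ_def
  have hA : A = (1 - 2*E₀*(1-t)) + D := by
    rw [hA_def, hD_def]
    calc ∑ m : Fin (M+1), ∑ n : Fin (M+1), p m n * ccH ξ (m:ℕ) 0 * ccH ξ (n:ℕ) 0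
        = ∑ m : Fin (M+1), ∑ n : Fin (M+1),
          (p m n - (1-t)*((((m:ℕ):ℝ)+((n:ℕ):ℝ)) * p m n)
            + p m n * (t^((m:ℕ)+(n:ℕ)) - 1 + (1-t)*(((m:ℕ):ℝ)+((n:ℕ):ℝ)))) := by
          apply dsum_congr
          intro m n
          rw [ccH_zero' ξ t ht_def, ccH_zero' ξ t ht_def, pow_add]
          ring
      _ = ((∑ m : Fin (M+1), ∑ n : Fin (M+1), p m n)
            - (1-t) * ∑ m : Fin (M+1), ∑ n : Fin (M+1), (((m:ℕ):ℝ)+((n:ℕ):ℝ)) * p m n)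
          + ∑ m : Fin (M+1), ∑ n : Fin (M+1),
            p m n * (t^((m:ℕ)+(n:ℕ)) - 1 + (1-t)*(((m:ℕ):ℝ)+((n:ℕ):ℝ))) := by
          rw [dsum_add, dsum_sub, dsum_mul]
      _ = (1 - 2*E₀*(1-t)) + ∑ m : Fin (M+1), ∑ n : Fin (M+1),
            p m n * (t^((m:ℕ)+(n:ℕ)) - 1 + (1-t)*(((m:ℕ):ℝ)+((n:ℕ):ℝ))) := by
          rw [hp1, hpE]
          ring
  have hBC : B + C = ξ*(t*(2*E₀)) - ξ*Ψ := by
    have h1 : B + C + ξ*Ψ = ξ*(t*(2*E₀)) := by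
      rw [hB_def, hC_def, hΨ_def, ← dsum_mul, ← dsum_add, ← dsum_add]
      calc ∑ m : Fin (M+1), ∑ n : Fin (M+1),
          (p m n * ccH ξ (m:ℕ) 0 * ccH ξ (n:ℕ) 1 + p m n * ccH ξ (m:ℕ) 1 * ccH ξ (n:ℕ) 0
            + ξ * (p m n * ((((m:ℕ):ℝ)+((n:ℕ):ℝ))*t - (((m:ℕ):ℝ)+((n:ℕ):ℝ))*t^((m:ℕ)+(n:ℕ)))))
          = ∑ m : Fin (M+1), ∑ n : Fin (M+1), (ξ*t) * ((((m:ℕ):ℝ)+((n:ℕ):ℝ)) * p m n) := by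
            apply dsum_congr
            intro m n
            rw [ccH_zero' ξ t ht_def, ccH_zero' ξ t ht_def, ccH_one' ξ t ht_def,
              ccH_one' ξ t ht_def, pow_add]
            ring
        _ = ξ*(t*(2*E₀)) := by
            rw [dsum_mul, hpE]
            ring
    linarith
  have hD0 : 0 ≤ D := by
    rw [hD_def]
    apply dsum_nonneg
    intro m n
    apply mul_nonneg (hp0 m n)
    have h := phi_nonneg t ht0.le ht1.le ((m:ℕ)+(n:ℕ))
    push_cast at h
    exact h
  have hG : 0 ≤ (1 - 2*E₀*(1-t)) * D - (ξ*(ξ*t*E₀)) * Ψ := by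
    rw [hD_def, hΨ_def, ← dsum_mul, ← dsum_mul, ← dsum_sub]
    apply dsum_nonneg
    intro m n
    have h := scalar_key ξ t E₀ ht0 ht1 hu hE₀0 hE₀q ((m:ℕ)+(n:ℕ))
    push_cast at h
    calc (0:ℝ) ≤ p m n * ((1 - 2*E₀*(1-t)) * (t^((m:ℕ)+(n:ℕ)) - 1 + (1-t)*(((m:ℕ):ℝ)+((n:ℕ):ℝ)))
        - (ξ*(ξ*t*E₀)) * ((((m:ℕ):ℝ)+((n:ℕ):ℝ))*t - (((m:ℕ):ℝ)+((n:ℕ):ℝ))*t^((m:ℕ)+(n:ℕ)))) :=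
          mul_nonneg (hp0 m n) h
      _ = (1 - 2*E₀*(1-t)) * (p m n * (t^((m:ℕ)+(n:ℕ)) - 1 + (1-t)*(((m:ℕ):ℝ)+((n:ℕ):ℝ))))
          - (ξ*(ξ*t*E₀)) * (p m n * ((((m:ℕ):ℝ)+((n:ℕ):ℝ))*t
            - (((m:ℕ):ℝ)+((n:ℕ):ℝ))*t^((m:ℕ)+(n:ℕ)))) := by ring
  have hcpos : (0:ℝ) < 1/((1+ξ)*(1+ξ)) := div_pos one_pos (mul_pos hξ1 hξ1)
  clear_value A B C D Ψ
  have eA : A^2 = (1 - 2*E₀*(1-t))^2 + 2*(1 - 2*E₀*(1-t))*D + D^2 := by rw [hA]; ring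
  have eB : B^2 + C^2 = ((B+C)^2 + (B-C)^2)/2 := by ring
  have eBC : (B+C)^2 = (2*(ξ*t*E₀))^2 - 2*(2*(ξ*t*E₀))*(ξ*Ψ) + (ξ*Ψ)^2 := by
    rw [hBC]; ring
  have hmain : (1 - 2*E₀*(1-t))^2 + (ξ*t*E₀)^2 + (ξ*t*E₀)^2 ≤ A^2 + B^2 + C^2 := by
    clear hfp hfopt hlow hWopt hWoptz hpE hp1 hp0 hfeas hoptz hopt00 hopt01 hopt10 hA hBC
    linarith [eA, eB, eBC, hG, hD0, sq_nonneg (B - C), sq_nonneg D, sq_nonneg (ξ*Ψ)]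
  constructor
  · rw [hfopt, hfp]
    apply mul_le_mul_of_nonneg_left (le_trans hmain hlow) hcpos.le
  · intro heq
    rw [hfp, hfopt] at heq
    have hSig : (∑ r : Fin (M+1) × Fin (M+1), (∑ m : Fin (M+1), ∑ n : Fin (M+1),
        p m n * ccH ξ (m:ℕ) (r.1:ℕ) * ccH ξ (n:ℕ) (r.2:ℕ))^2)
        = (1 - 2*E₀*(1-t))^2 + (ξ*t*E₀)^2 + (ξ*t*E₀)^2 :=
      mul_left_cancel₀ hcpos.ne' heq
    have hle : A^2 + B^2 + C^2 ≤ (1 - 2*E₀*(1-t))^2 + (ξ*t*E₀)^2 + (ξ*t*E₀)^2 :=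
      hlow.trans hSig.le
    have hD2 : D^2 ≤ 0 := by
      clear hfp hfopt hlow hWopt hWoptz hpE hp1 hp0 hfeas hoptz hopt00 hopt01 hopt10 hA hBC hSig heq
      linarith [eA, eB, eBC, hG, hle, hD0, sq_nonneg (B - C), sq_nonneg (ξ*Ψ)]
    have hDz : D = 0 := (pow_eq_zero_iff two_ne_zero).1 (le_antisymm hD2 (sq_nonneg D))
    have hBC2 : (B - C)^2 ≤ 0 := by
      clear hfp hfopt hlow hWopt hWoptz hpE hp1 hp0 hfeas hoptz hopt00 hopt01 hopt10 hA hBC hSig heq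
      linarith [eA, eB, eBC, hG, hle, hD0, sq_nonneg D, sq_nonneg (ξ*Ψ)]
    have hBCeq : B = C := sub_eq_zero.1 ((pow_eq_zero_iff two_ne_zero).1 (le_antisymm hBC2 (sq_nonneg (B - C))))
    -- support of p
    have hsupp : ∀ m n : Fin (M+1), 2 ≤ (m:ℕ) + (n:ℕ) → p m n = 0 := by
      intro m n h2
      have hterm := dsum_eq_zero (f := fun m n : Fin (M+1) =>
        p m n * (t^((m:ℕ)+(n:ℕ)) - 1 + (1-t)*(((m:ℕ):ℝ)+((n:ℕ):ℝ))))
        (fun m n => by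
          apply mul_nonneg (hp0 m n)
          have h := phi_nonneg t ht0.le ht1.le ((m:ℕ)+(n:ℕ))
          push_cast at h
          exact h)
        (by rw [← hD_def]; exact hDz) m n
      have hφpos : 0 < t^((m:ℕ)+(n:ℕ)) - 1 + (1-t)*(((m:ℕ):ℝ)+((n:ℕ):ℝ)) := by
        have h := phi_ge t ht0.le ht1.le ((m:ℕ)+(n:ℕ)) (by omega)
        have hs2 : (2:ℝ) ≤ (((m:ℕ)+(n:ℕ) : ℕ):ℝ) := by exact_mod_cast h2
        push_cast at h hs2
        have hpos : 0 < ((((m:ℕ):ℝ)+((n:ℕ):ℝ)) - 1) * (1-t)^2 :=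
          mul_pos (by linarith) (pow_pos (by linarith) 2)
        linarith
      rcases mul_eq_zero.1 hterm with h | h
      · exact h
      · linarith
    -- values of p on the support
    have hq1 : p 0 0 + p 0 1 + p 1 0 = 1 := by
      rw [← sum3 hM p hsupp]
      exact hp1
    have hq2 : p 0 1 + p 1 0 = 2*E₀ := by
      have h := sum3 hM (fun m n => (((m:ℕ):ℝ) + ((n:ℕ):ℝ)) * p m n)
        (fun m n h2 => by simp only [hsupp m n h2, mul_zero])
      rw [hpE] at h
      simp only [e0, e1, Nat.cast_zero, Nat.cast_one] at h
      linarith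
    have hBv : B = p 0 1 * (ξ*t) := by
      rw [hB_def, sum3 hM _ (fun m n h2 => by simp only [hsupp m n h2, zero_mul])]
      simp only [e0, e1, hcc00, hcc01, hcc10, hcc11]
      ring
    have hCv : C = p 1 0 * (ξ*t) := by
      rw [hC_def, sum3 hM _ (fun m n h2 => by simp only [hsupp m n h2, zero_mul])]
      simp only [e0, e1, hcc00, hcc01, hcc10, hcc11]
      ring
    have hξt : ξ*t ≠ 0 := by positivity
    have hp0110 : p 0 1 = p 1 0 := by
      rw [hBv, hCv] at hBCeq
      exact mul_right_cancel₀ hξt hBCeq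
    have hv01 : p 0 1 = E₀ := by linarith
    have hv10 : p 1 0 = E₀ := by linarith
    have hv00 : p 0 0 = 1 - 2*E₀ := by linarith
    funext m n
    by_cases h2 : 2 ≤ (m:ℕ) + (n:ℕ)
    · rw [hsupp m n h2, hoptz m n h2]
    · push_neg at h2
      have hc : ((m:ℕ) = 0 ∧ (n:ℕ) = 0) ∨ ((m:ℕ) = 0 ∧ (n:ℕ) = 1) ∨
          ((m:ℕ) = 1 ∧ (n:ℕ) = 0) := by omega
      rcases hc with ⟨a, b⟩ | ⟨a, b⟩ | ⟨a, b⟩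
      · have hm : m = 0 := Fin.ext (by rw [a]; exact e0.symm)
        have hn : n = 0 := Fin.ext (by rw [b]; exact e0.symm)
        rw [hm, hn, hv00, hopt00]
      · have hm : m = 0 := Fin.ext (by rw [a]; exact e0.symm)
        have hn : n = 1 := Fin.ext (by rw [b]; exact e1.symm)
        rw [hm, hn, hv01, hopt01]
      · have hm : m = 1 := Fin.ext (by rw [a]; exact e1.symm)
        have hn : n = 0 := Fin.ext (by rw [b]; exact e0.symm)
        rw [hm, hn, hv10, hopt10]
end
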